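/- Let T ⊂ ℝ² be the interior of the convex hull of the three points (0,−1/2), (0,1/2), (3/4,0) (an isosceles triangle with base 1 and height 3/4). Then the supremum of all radii r > 0 such that there exist two disjoint open Euclidean balls of radius r both contained in T equals 3/(2(5 + √13)). -/

import Mathlib

/-- The point of the Euclidean plane `ℝ²` with coordinates `a`, `b`. -/
noncomputable def pt (a b : ℝ) : EuclideanSpace ℝ (Fin 2) := WithLp.toLp 2 ![a, b]

noncomputable def Tri : Set (EuclideanSpace ℝ (Fin 2)) :=
  {pt 0 (-(1 / 2)), pt 0 (1 / 2), pt (3 / 4) 0}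

open Metric Real

lemma proj_linear (i : Fin 2) : IsLinearMap ℝ (fun p : EuclideanSpace ℝ (Fin 2) => p i) :=
  (EuclideanSpace.projₗ i).isLinear

lemma lin2 : IsLinearMap ℝ (fun p : EuclideanSpace ℝ (Fin 2) => 2 * p 0 + 3 * p 1) := by
  constructor
  · intro x y; simp [PiLp.add_apply]; ring
  · intro c x; simp [PiLp.smul_apply, smul_eq_mul]; ring

lemma lin3 : IsLinearMap ℝ (fun p : EuclideanSpace ℝ (Fin 2) => 2 * p 0 - 3 * p 1) := by
  constructor
  · intro x y; simp [PiLp.add_apply]; ring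
  · intro c x; simp [PiLp.smul_apply, smul_eq_mul]; ring

lemma dist_sq (x y : EuclideanSpace ℝ (Fin 2)) :
    dist x y ^ 2 = (x 0 - y 0)^2 + (x 1 - y 1)^2 := by
  rw [EuclideanSpace.dist_eq, Real.sq_sqrt (by positivity)]
  simp [Fin.sum_univ_two, Real.dist_eq, sq_abs]

lemma mem_K_of_hull {p : EuclideanSpace ℝ (Fin 2)} (hp : p ∈ convexHull ℝ Tri) :
    0 ≤ p 0 ∧ 2 * p 0 + 3 * p 1 ≤ 3/2 ∧ 2 * p 0 - 3 * p 1 ≤ 3/2 := by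
  have hK : Convex ℝ ({w : EuclideanSpace ℝ (Fin 2) | 0 ≤ w 0} ∩
      ({w | 2 * w 0 + 3 * w 1 ≤ 3/2} ∩ {w | 2 * w 0 - 3 * w 1 ≤ 3/2})) :=
    (convex_halfSpace_ge (proj_linear 0) 0).inter
      ((convex_halfSpace_le lin2 (3/2)).inter (convex_halfSpace_le lin3 (3/2)))
  have h := convexHull_min (s := Tri) ?_ hK hp
  · exact ⟨h.1, h.2.1, h.2.2⟩
  · rintro q (rfl | rfl | rfl) <;>
      refine ⟨?_, ?_, ?_⟩ <;> norm_num [pt, Set.mem_setOf_eq]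

lemma hull_of_K {p : EuclideanSpace ℝ (Fin 2)} (h0 : 0 ≤ p 0)
    (h1 : 2 * p 0 + 3 * p 1 ≤ 3/2) (h2 : 2 * p 0 - 3 * p 1 ≤ 3/2) :
    p ∈ convexHull ℝ Tri := by
  set a := p 0 with ha
  set b := p 1 with hb
  have key := (convex_convexHull ℝ Tri).sum_mem (t := (Finset.univ : Finset (Fin 3)))
    (w := ![1/2 - 2*a/3 - b, 1/2 - 2*a/3 + b, 4*a/3])
    (z := ![pt 0 (-(1/2)), pt 0 (1/2), pt (3/4) 0]) ?_ ?_ ?_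
  · rw [Fin.sum_univ_three] at key
    have hp : p = (1/2 - 2*a/3 - b) • pt 0 (-(1/2)) + (1/2 - 2*a/3 + b) • pt 0 (1/2)
        + (4*a/3) • pt (3/4) 0 := by
      ext i
      fin_cases i <;>
        simp [PiLp.add_apply, PiLp.smul_apply, pt, smul_eq_mul, ← ha, ← hb] <;> ring
    rw [hp]
    simpa using key
  · intro i _
    fin_cases i <;> simp <;> linarith
  · simp [Fin.sum_univ_three]; ring
  · intro i _
    fin_cases i <;> simp [Tri] <;> apply subset_convexHull <;> simp [Tri]

/-- the open triangle is contained in the interior of the hull -/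
lemma Topen_sub_interior :
    {q : EuclideanSpace ℝ (Fin 2) | 0 < q 0 ∧ 2 * q 0 + 3 * q 1 < 3/2 ∧
      2 * q 0 - 3 * q 1 < 3/2} ⊆ interior (convexHull ℝ Tri) := by
  apply interior_maximal
  · exact fun q hq => hull_of_K hq.1.le hq.2.1.le hq.2.2.le
  · have c0 : Continuous fun q : EuclideanSpace ℝ (Fin 2) => q 0 :=
      (EuclideanSpace.proj (0 : Fin 2)).continuous
    have c1 : Continuous fun q : EuclideanSpace ℝ (Fin 2) => q 1 :=
      (EuclideanSpace.proj (1 : Fin 2)).continuous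
    refine IsOpen.inter (isOpen_lt continuous_const c0) (IsOpen.inter ?_ ?_)
    · exact isOpen_lt ((continuous_const.mul c0).add (continuous_const.mul c1)) continuous_const
    · exact isOpen_lt ((continuous_const.mul c0).sub (continuous_const.mul c1)) continuous_const

lemma sqrt13_sq : Real.sqrt 13 ^ 2 = 13 := Real.sq_sqrt (by norm_num)
lemma sqrt13_pos : 0 < Real.sqrt 13 := Real.sqrt_pos.2 (by norm_num)

/-- lower bound direction: balls with these center constraints fit in the interior -/
lemma myBall_sub {x : EuclideanSpace ℝ (Fin 2)} {r : ℝ}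
    (h0 : r ≤ x 0) (h1 : 2 * x 0 + 3 * x 1 + Real.sqrt 13 * r ≤ 3/2)
    (h2 : 2 * x 0 - 3 * x 1 + Real.sqrt 13 * r ≤ 3/2) :
    Metric.ball x r ⊆ interior (convexHull ℝ Tri) := by
  intro y hy
  apply Topen_sub_interior
  rw [Metric.mem_ball] at hy
  have hr : 0 ≤ r := le_trans dist_nonneg hy.le
  have hsq : (y 0 - x 0)^2 + (y 1 - x 1)^2 < r^2 := by
    have := pow_lt_pow_left₀ hy dist_nonneg (n := 2) (by norm_num)
    rw [dist_sq] at this; linarith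
  set u := y 0 - x 0 with hu
  set v := y 1 - x 1 with hv
  have s13 := sqrt13_sq
  have s13p := sqrt13_pos
  refine ⟨?_, ?_, ?_⟩
  · nlinarith [sq_nonneg (u + r), sq_nonneg v]
  · have habs : 2*u + 3*v < Real.sqrt 13 * r := by
      have h13 : (2*u + 3*v)^2 < (Real.sqrt 13 * r)^2 := by
        have : (2*u+3*v)^2 ≤ 13 * (u^2+v^2) := by nlinarith [sq_nonneg (3*u - 2*v)]
        nlinarith
      exact lt_of_pow_lt_pow_left₀ 2 (by positivity) h13
    have : y 0 = x 0 + u := by rw [hu]; ring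
    have : y 1 = x 1 + v := by rw [hv]; ring
    nlinarith
  · have habs : 2*u - 3*v < Real.sqrt 13 * r := by
      have h13 : (2*u - 3*v)^2 < (Real.sqrt 13 * r)^2 := by
        have : (2*u-3*v)^2 ≤ 13 * (u^2+v^2) := by nlinarith [sq_nonneg (3*u + 2*v)]
        nlinarith
      exact lt_of_pow_lt_pow_left₀ 2 (by positivity) h13
    nlinarith

lemma aux_lim {r A : ℝ} (hr : 0 < r) (h : ∀ t, 0 < t → t < r → t ≤ A) : r ≤ A := by
  by_contra hc
  push_neg at hc
  set t := (max A (r/2) + r)/2 with ht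
  have hmax : max A (r/2) < r := max_lt hc (by linarith)
  have h1 : t < r := by rw [ht]; linarith
  have h2 : 0 < t := by
    have := le_max_right A (r/2); rw [ht]; linarith
  have h3 := h t h2 h1
  have := le_max_left A (r/2)
  rw [ht] at h3; linarith

/-- upper bound direction: from a ball inside the hull, constraints on the center -/
lemma center_constraints {x : EuclideanSpace ℝ (Fin 2)} {r : ℝ} (hr : 0 < r)
    (h : Metric.ball x r ⊆ convexHull ℝ Tri) :
    r ≤ x 0 ∧ 2 * x 0 + 3 * x 1 + Real.sqrt 13 * r ≤ 3/2 ∧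
      2 * x 0 - 3 * x 1 + Real.sqrt 13 * r ≤ 3/2 := by
  have s13 := sqrt13_sq
  have s13p := sqrt13_pos
  have key : ∀ t, 0 < t → t < r → ∀ c d : ℝ, c^2 + d^2 = 1 →
      (0 ≤ x 0 + t*c ∧ 2*(x 0 + t*c) + 3*(x 1 + t*d) ≤ 3/2 ∧
        2*(x 0 + t*c) - 3*(x 1 + t*d) ≤ 3/2) := by
    intro t ht htr c d hcd
    have hyc0 : (x + t • pt c d) 0 = x 0 + t*c := by
      simp [PiLp.add_apply, PiLp.smul_apply, pt, smul_eq_mul]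
    have hyc1 : (x + t • pt c d) 1 = x 1 + t*d := by
      simp [PiLp.add_apply, PiLp.smul_apply, pt, smul_eq_mul]
    have hy : (x + t • pt c d) ∈ Metric.ball x r := by
      rw [Metric.mem_ball]
      have hd2 : dist (x + t • pt c d) x ^ 2 = t^2 := by
        rw [dist_sq, hyc0, hyc1]; ring_nf; nlinarith [hcd]
      have : dist (x + t • pt c d) x ^ 2 < r^2 := by rw [hd2]; nlinarith
      exact lt_of_pow_lt_pow_left₀ 2 hr.le this
    have hm := mem_K_of_hull (h hy)
    rw [hyc0, hyc1] at hm
    exact hm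
  constructor
  · apply aux_lim hr
    intro t ht htr
    have := (key t ht htr (-1) 0 (by norm_num)).1
    linarith
  constructor
  · have hgoal : r ≤ (3/2 - 2*x 0 - 3*x 1) / Real.sqrt 13 := by
      apply aux_lim hr
      intro t ht htr
      have hcd : (2/Real.sqrt 13)^2 + (3/Real.sqrt 13)^2 = 1 := by
        field_simp; nlinarith
      have := (key t ht htr (2/Real.sqrt 13) (3/Real.sqrt 13) hcd).2.1
      rw [le_div_iff₀ s13p]
      have h13 : t * (2*(2/Real.sqrt 13)) + t * (3*(3/Real.sqrt 13)) = Real.sqrt 13 * t := by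
        field_simp; nlinarith
      nlinarith
    rw [le_div_iff₀ s13p] at hgoal
    nlinarith
  · have hgoal : r ≤ (3/2 - 2*x 0 + 3*x 1) / Real.sqrt 13 := by
      apply aux_lim hr
      intro t ht htr
      have hcd : (2/Real.sqrt 13)^2 + (-3/Real.sqrt 13)^2 = 1 := by
        field_simp; nlinarith
      have := (key t ht htr (2/Real.sqrt 13) (-3/Real.sqrt 13) hcd).2.2
      rw [le_div_iff₀ s13p]
      have h13 : t * (2*(2/Real.sqrt 13)) - t * (3*(-3/Real.sqrt 13)) = Real.sqrt 13 * t := by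
        field_simp; nlinarith
      nlinarith
    rw [le_div_iff₀ s13p] at hgoal
    nlinarith

lemma core (a b a' b' r c : ℝ) (ha : r ≤ a) (ha' : r ≤ a')
    (h1 : 2*a+3*b ≤ c) (h2 : 2*a-3*b ≤ c) (h1' : 2*a'+3*b' ≤ c) (h2' : 2*a'-3*b' ≤ c) :
    (a-a')^2 + (b-b')^2 ≤ (2*(c-2*r)/3)^2 := by
  nlinarith [sq_nonneg (a-a'), sq_nonneg (a+a'-2*r),
    mul_nonneg (sub_nonneg.2 ha) (sub_nonneg.2 ha'), sq_nonneg (b-b')]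

lemma dist_ge_of_disjoint {x₁ x₂ : EuclideanSpace ℝ (Fin 2)} {r : ℝ} (hr : 0 < r)
    (hd : Metric.ball x₁ r ∩ Metric.ball x₂ r = ∅) : 2*r ≤ dist x₁ x₂ := by
  by_contra hc
  push_neg at hc
  have hm1 : midpoint ℝ x₁ x₂ ∈ Metric.ball x₁ r := by
    rw [Metric.mem_ball, dist_midpoint_left]
    simp only [Real.norm_ofNat]
    rw [inv_mul_lt_iff₀ (by norm_num)]
    linarith
  have hm2 : midpoint ℝ x₁ x₂ ∈ Metric.ball x₂ r := by
    rw [Metric.mem_ball, dist_midpoint_right]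
    simp only [Real.norm_ofNat]
    rw [inv_mul_lt_iff₀ (by norm_num)]
    linarith
  have : midpoint ℝ x₁ x₂ ∈ Metric.ball x₁ r ∩ Metric.ball x₂ r := ⟨hm1, hm2⟩
  rw [hd] at this
  exact this

/-- The largest radius `r` such that two disjoint open balls of
radius `r` fit inside the open isosceles triangle with vertices `(0,-1/2)`,
`(0,1/2)`, `(3/4,0)` (base 1, height 3/4) equals `3/(2(5 + √13))`. -/
theorem stmt_13 :
    sSup {r : ℝ | 0 < r ∧ ∃ x₁ x₂ : EuclideanSpace ℝ (Fin 2),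
        Metric.ball x₁ r ⊆ interior (convexHull ℝ
          ({pt 0 (-(1 / 2)), pt 0 (1 / 2), pt (3 / 4) 0} : Set (EuclideanSpace ℝ (Fin 2)))) ∧
        Metric.ball x₂ r ⊆ interior (convexHull ℝ
          ({pt 0 (-(1 / 2)), pt 0 (1 / 2), pt (3 / 4) 0} : Set (EuclideanSpace ℝ (Fin 2)))) ∧
        Metric.ball x₁ r ∩ Metric.ball x₂ r = ∅} =
      3 / (2 * (5 + Real.sqrt 13)) := by
  have hTri : ({pt 0 (-(1 / 2)), pt 0 (1 / 2), pt (3 / 4) 0} :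
      Set (EuclideanSpace ℝ (Fin 2))) = Tri := rfl
  rw [hTri]
  set r₂ := 3 / (2 * (5 + Real.sqrt 13)) with hr₂
  have s13 := sqrt13_sq
  have s13p := sqrt13_pos
  have hden : (0:ℝ) < 2 * (5 + Real.sqrt 13) := by positivity
  have hr₂pos : 0 < r₂ := by rw [hr₂]; positivity
  have hval : (5 + Real.sqrt 13) * r₂ = 3/2 := by
    rw [hr₂]; field_simp
  -- membership of r₂
  have hmem : r₂ ∈ {r : ℝ | 0 < r ∧ ∃ x₁ x₂ : EuclideanSpace ℝ (Fin 2),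
      Metric.ball x₁ r ⊆ interior (convexHull ℝ Tri) ∧
      Metric.ball x₂ r ⊆ interior (convexHull ℝ Tri) ∧
      Metric.ball x₁ r ∩ Metric.ball x₂ r = ∅} := by
    have hpt0 : ∀ a b : ℝ, pt a b 0 = a := fun _ _ => rfl
    have hpt1 : ∀ a b : ℝ, pt a b 1 = b := fun _ _ => rfl
    refine ⟨hr₂pos, pt r₂ r₂, pt r₂ (-r₂), ?_, ?_, ?_⟩
    · apply myBall_sub <;> simp only [hpt0, hpt1] <;> nlinarith
    · apply myBall_sub <;> simp only [hpt0, hpt1] <;> nlinarith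
    · rw [Set.eq_empty_iff_forall_notMem]
      rintro y ⟨hy1, hy2⟩
      rw [Metric.mem_ball] at hy1 hy2
      have hdd : dist (pt r₂ r₂) (pt r₂ (-r₂)) ^ 2 = (2*r₂)^2 := by
        rw [dist_sq]
        show (r₂ - r₂)^2 + (r₂ - -r₂)^2 = (2*r₂)^2
        ring
      have htri := dist_triangle (pt r₂ r₂) y (pt r₂ (-r₂))
      rw [dist_comm (pt r₂ r₂) y] at htri
      nlinarith [dist_nonneg (x := pt r₂ r₂) (y := pt r₂ (-r₂))]
  -- upper bound
  have hub : ∀ r ∈ {r : ℝ | 0 < r ∧ ∃ x₁ x₂ : EuclideanSpace ℝ (Fin 2),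
      Metric.ball x₁ r ⊆ interior (convexHull ℝ Tri) ∧
      Metric.ball x₂ r ⊆ interior (convexHull ℝ Tri) ∧
      Metric.ball x₁ r ∩ Metric.ball x₂ r = ∅}, r ≤ r₂ := by
    rintro r ⟨hr, x₁, x₂, h1, h2, hd⟩
    have c1 := center_constraints hr (h1.trans interior_subset)
    have c2 := center_constraints hr (h2.trans interior_subset)
    have hdist := dist_ge_of_disjoint hr hd
    have hsq := dist_sq x₁ x₂
    have hcore := core (x₁ 0) (x₁ 1) (x₂ 0) (x₂ 1) r (3/2 - Real.sqrt 13 * r)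
      c1.1 c2.1 (by linarith [c1.2.1]) (by linarith [c1.2.2])
      (by linarith [c2.2.1]) (by linarith [c2.2.2])
    have hcpos : 2*r ≤ 3/2 - Real.sqrt 13 * r := by linarith [c1.1, c1.2.1, c1.2.2]
    have h2r : 2*r ≤ 2*(3/2 - Real.sqrt 13 * r - 2*r)/3 := by
      have hA : (2*r)^2 ≤ (2*(3/2 - Real.sqrt 13 * r - 2*r)/3)^2 := by
        have : (2*r)^2 ≤ dist x₁ x₂ ^ 2 := by
          nlinarith [dist_nonneg (x := x₁) (y := x₂)]
        rw [hsq] at this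
        linarith [hcore]
      exact le_of_pow_le_pow_left₀ two_ne_zero (by linarith) hA
    rw [hr₂, le_div_iff₀ hden]
    nlinarith
  apply le_antisymm
  · exact csSup_le ⟨r₂, hmem⟩ hub
  · exact le_csSup ⟨r₂, hub⟩ hmem
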